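/- arXiv:0805.2447 — 3 statements merged into one kernel-verified Lean document; each statement's English description precedes it below -/
import Mathlib

section
/- Let X and Y be normed spaces over ℂ, let u ∈ X with ‖u‖ = 1, and let E = X ⊕¹ Y be the product X × Y equipped with the norm ‖(x,y)‖ = ‖x‖ + ‖y‖. Then n(E; (u,0)) = n(X; u). -/
set_option maxHeartbeats 800000
set_option synthInstance.maxHeartbeats 200000

/-- `S(X;u)`: the set of norm-one continuous linear functionals attaining value `1` at `u`. -/
def geomStates {X : Type*} [NormedAddCommGroup X] [NormedSpace ℂ X] (u : X) :
    Set (X →L[ℂ] ℂ) :=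
  {f | ‖f‖ = 1 ∧ f u = 1}

/-- `γ^u(x) = sup {|f(x)| : f ∈ S(X;u)}`. -/
noncomputable def geomGamma {X : Type*} [NormedAddCommGroup X] [NormedSpace ℂ X]
    (u x : X) : ℝ :=
  sSup {r : ℝ | ∃ f ∈ geomStates u, r = ‖f x‖}

/-- `n(X;u) = inf {γ^u(x) : ‖x‖ = 1}`. -/
noncomputable def geomN {X : Type*} [NormedAddCommGroup X] [NormedSpace ℂ X] (u : X) : ℝ :=
  sInf {r : ℝ | ∃ x : X, ‖x‖ = 1 ∧ r = geomGamma u x}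

section Aux

variable {X Y : Type*} [NormedAddCommGroup X] [NormedSpace ℂ X]
  [NormedAddCommGroup Y] [NormedSpace ℂ Y]

lemma states_nonempty (u : X) (hu : ‖u‖ = 1) : (geomStates u).Nonempty := by
  obtain ⟨f, hf1, hf2⟩ := exists_dual_vector ℂ u (by
    intro h; rw [h] at hu; simp at hu)
  exact ⟨f, hf1, by rw [hf2, hu]; norm_num⟩

lemma gset_bddAbove (u x : X) : BddAbove {r : ℝ | ∃ f ∈ geomStates u, r = ‖f x‖} := by
  refine ⟨‖x‖, ?_⟩
  rintro r ⟨f, hf, rfl⟩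
  calc ‖f x‖ ≤ ‖f‖ * ‖x‖ := f.le_opNorm x
    _ = ‖x‖ := by rw [hf.1, one_mul]

lemma le_gamma {u x : X} {f : X →L[ℂ] ℂ} (hf : f ∈ geomStates u) : ‖f x‖ ≤ geomGamma u x :=
  le_csSup (gset_bddAbove u x) ⟨f, hf, rfl⟩

lemma gamma_le {u x : X} {a : ℝ} (hne : (geomStates u).Nonempty)
    (h : ∀ f ∈ geomStates u, ‖f x‖ ≤ a) : geomGamma u x ≤ a := by
  refine csSup_le ⟨‖hne.choose x‖, hne.choose, hne.choose_spec, rfl⟩ ?_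
  rintro r ⟨f, hf, rfl⟩; exact h f hf

lemma gamma_nonneg (u x : X) : 0 ≤ geomGamma u x :=
  Real.sSup_nonneg (by rintro r ⟨f, hf, rfl⟩; positivity)

lemma gamma_u (u : X) (hu : ‖u‖ = 1) : geomGamma u u = 1 := by
  obtain ⟨f, hf⟩ := states_nonempty u hu
  refine le_antisymm (gamma_le ⟨f, hf⟩ fun g hg => by rw [hg.2]; simp) ?_
  have h := le_gamma (x := u) hf
  rwa [hf.2, norm_one] at h

lemma nset_bddBelow (u : X) : BddBelow {r : ℝ | ∃ x : X, ‖x‖ = 1 ∧ r = geomGamma u x} :=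
  ⟨0, by rintro r ⟨x, hx, rfl⟩; exact gamma_nonneg u x⟩

lemma geomN_le_one (u : X) (hu : ‖u‖ = 1) : geomN u ≤ 1 :=
  csInf_le (nset_bddBelow u) ⟨u, hu, (gamma_u u hu).symm⟩

lemma geomN_le_gamma {u x : X} (hx : ‖x‖ = 1) : geomN u ≤ geomGamma u x :=
  csInf_le (nset_bddBelow u) ⟨x, hx, rfl⟩

lemma n_mul_norm_le_gamma (u : X) (hu : ‖u‖ = 1) (x : X) :
    geomN u * ‖x‖ ≤ geomGamma u x := by
  rcases eq_or_ne x 0 with rfl | hx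
  · simpa using gamma_nonneg u 0
  · have ht : (0:ℝ) < ‖x‖ := norm_pos_iff.mpr hx
    set t : ℝ := ‖x‖ with htdef
    have hx' : ‖((t:ℂ))⁻¹ • x‖ = 1 := by
      rw [norm_smul, norm_inv, Complex.norm_real, Real.norm_of_nonneg ht.le]
      field_simp
      exact htdef.symm
    have h1 : geomN u ≤ geomGamma u (((t:ℂ))⁻¹ • x) := geomN_le_gamma hx'
    have h2 : geomGamma u (((t:ℂ))⁻¹ • x) ≤ t⁻¹ * geomGamma u x := by
      refine gamma_le (states_nonempty u hu) fun f hf => ?_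
      rw [map_smul, norm_smul, norm_inv, Complex.norm_real, Real.norm_of_nonneg ht.le]
      exact mul_le_mul_of_nonneg_left (le_gamma hf) (by positivity)
    have := h1.trans h2
    calc geomN u * t ≤ (t⁻¹ * geomGamma u x) * t := by nlinarith
      _ = geomGamma u x := by field_simp

lemma Enorm (z : WithLp 1 (X × Y)) : ‖z‖ = ‖z.fst‖ + ‖z.snd‖ := by
  rw [WithLp.prod_norm_eq_add (by norm_num)]
  norm_num

/-- The functional `(x,y) ↦ f x + g y` on `X ⊕¹ Y`. -/
noncomputable def toE (f : X →L[ℂ] ℂ) (g : Y →L[ℂ] ℂ) : WithLp 1 (X × Y) →L[ℂ] ℂ :=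
  (f.comp (ContinuousLinearMap.fst ℂ X Y) + g.comp (ContinuousLinearMap.snd ℂ X Y)).comp
    (WithLp.prodContinuousLinearEquiv 1 ℂ X Y).toContinuousLinearMap

lemma toE_apply (f : X →L[ℂ] ℂ) (g : Y →L[ℂ] ℂ) (z : WithLp 1 (X × Y)) :
    toE f g z = f z.fst + g z.snd := rfl

/-- The restriction of a functional on `X ⊕¹ Y` to `X`. -/
noncomputable def restr (F : WithLp 1 (X × Y) →L[ℂ] ℂ) : X →L[ℂ] ℂ :=
  F.comp ((WithLp.prodContinuousLinearEquiv 1 ℂ X Y).symm.toContinuousLinearMap.comp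
    (ContinuousLinearMap.inl ℂ X Y))

lemma restr_apply (F : WithLp 1 (X × Y) →L[ℂ] ℂ) (x : X) :
    restr F x = F ((WithLp.equiv 1 (X × Y)).symm (x, 0)) := rfl

lemma u0_fst (u : X) : ((WithLp.equiv 1 (X × Y)).symm (u, (0:Y))).fst = u := rfl
lemma u0_snd (u : X) : ((WithLp.equiv 1 (X × Y)).symm (u, (0:Y))).snd = (0:Y) := rfl

lemma u0_norm (u : X) (hu : ‖u‖ = 1) : ‖(WithLp.equiv 1 (X × Y)).symm (u, (0:Y))‖ = 1 := by
  rw [Enorm, u0_fst, u0_snd, hu, norm_zero, add_zero]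

lemma toE_mem {u : X} (hu : ‖u‖ = 1) {f : X →L[ℂ] ℂ} {g : Y →L[ℂ] ℂ}
    (hf : f ∈ geomStates u) (hg : ‖g‖ ≤ 1) :
    toE f g ∈ geomStates ((WithLp.equiv 1 (X × Y)).symm (u, 0)) := by
  have hval : toE f g ((WithLp.equiv 1 (X × Y)).symm (u, 0)) = 1 := by
    rw [toE_apply, u0_fst, u0_snd, map_zero, add_zero, hf.2]
  have hle : ‖toE f g‖ ≤ 1 := by
    refine ContinuousLinearMap.opNorm_le_bound _ zero_le_one fun z => ?_
    rw [toE_apply, Enorm, one_mul]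
    calc ‖f z.fst + g z.snd‖ ≤ ‖f z.fst‖ + ‖g z.snd‖ := norm_add_le _ _
      _ ≤ ‖f‖ * ‖z.fst‖ + ‖g‖ * ‖z.snd‖ := add_le_add (f.le_opNorm _) (g.le_opNorm _)
      _ ≤ 1 * ‖z.fst‖ + 1 * ‖z.snd‖ := by
          gcongr
          · exact le_of_eq hf.1
      _ = ‖z.fst‖ + ‖z.snd‖ := by ring
  refine ⟨le_antisymm hle ?_, hval⟩
  have := (toE f g).le_opNorm ((WithLp.equiv 1 (X × Y)).symm (u, 0))
  rw [hval, u0_norm u hu, mul_one, norm_one] at this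
  exact this

lemma restr_mem {u : X} (hu : ‖u‖ = 1) {F : WithLp 1 (X × Y) →L[ℂ] ℂ}
    (hF : F ∈ geomStates ((WithLp.equiv 1 (X × Y)).symm (u, 0))) :
    restr F ∈ geomStates u := by
  have hval : restr F u = 1 := by rw [restr_apply]; exact hF.2
  have hle : ‖restr F‖ ≤ 1 := by
    refine ContinuousLinearMap.opNorm_le_bound _ zero_le_one fun x => ?_
    rw [restr_apply, one_mul]
    calc ‖F ((WithLp.equiv 1 (X × Y)).symm (x, 0))‖
        ≤ ‖F‖ * ‖(WithLp.equiv 1 (X × Y)).symm (x, (0:Y))‖ := F.le_opNorm _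
      _ = ‖x‖ := by rw [hF.1, one_mul, Enorm, u0_fst, u0_snd, norm_zero, add_zero]
  refine ⟨le_antisymm hle ?_, hval⟩
  have h2 := (restr F).le_opNorm u
  rw [hval, hu, mul_one, norm_one] at h2
  exact h2

lemma gammaE_fst {u : X} (hu : ‖u‖ = 1) (x : X) :
    geomGamma ((WithLp.equiv 1 (X × Y)).symm (u, 0)) ((WithLp.equiv 1 (X × Y)).symm (x, 0))
      = geomGamma u x := by
  obtain ⟨f0, hf0⟩ := states_nonempty u hu
  have hE : (geomStates ((WithLp.equiv 1 (X × Y)).symm (u, (0:Y)))).Nonempty :=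
    ⟨toE f0 0, toE_mem hu hf0 (by simp)⟩
  refine le_antisymm ?_ ?_
  · refine gamma_le hE fun F hF => ?_
    have h : F ((WithLp.equiv 1 (X × Y)).symm (x, 0)) = restr F x := (restr_apply F x).symm
    rw [h]
    exact le_gamma (restr_mem hu hF)
  · refine gamma_le ⟨f0, hf0⟩ fun f hf => ?_
    have hm := toE_mem hu hf (g := (0 : Y →L[ℂ] ℂ)) (by simp)
    have happ : toE f (0 : Y →L[ℂ] ℂ) ((WithLp.equiv 1 (X × Y)).symm (x, 0)) = f x := by
      rw [toE_apply, u0_fst, u0_snd, map_zero, add_zero]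
    calc ‖f x‖ = ‖toE f (0 : Y →L[ℂ] ℂ) ((WithLp.equiv 1 (X × Y)).symm (x, 0))‖ := by
          rw [happ]
      _ ≤ _ := le_gamma hm

lemma gamma_plus {u : X} (hu : ‖u‖ = 1) (z : WithLp 1 (X × Y)) :
    geomGamma u z.fst + ‖z.snd‖ ≤ geomGamma ((WithLp.equiv 1 (X × Y)).symm (u, 0)) z := by
  have key : ∀ f ∈ geomStates u,
      ‖f z.fst‖ + ‖z.snd‖ ≤ geomGamma ((WithLp.equiv 1 (X × Y)).symm (u, 0)) z := by
    intro f hf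
    rcases eq_or_ne z.snd 0 with h2 | h2
    · have hm := toE_mem hu hf (g := (0 : Y →L[ℂ] ℂ)) (by simp)
      have hle := le_gamma (x := z) hm
      rw [toE_apply] at hle
      simp only [ContinuousLinearMap.zero_apply, add_zero] at hle
      rw [h2, norm_zero, add_zero]
      exact hle
    · obtain ⟨g0, hg1, hg2⟩ := exists_dual_vector ℂ z.snd (norm_ne_zero_iff.mpr h2)
      set θ : ℂ := if f z.fst = 0 then 1 else f z.fst / ‖f z.fst‖ with hθdef
      have hθ : ‖θ‖ = 1 := by
        rw [hθdef]; split_ifs with h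
        · simp
        · rw [norm_div, Complex.norm_real, Real.norm_of_nonneg (norm_nonneg _)]
          exact div_self (norm_ne_zero_iff.mpr h)
      have hfθ : f z.fst = θ * (‖f z.fst‖ : ℝ) := by
        rw [hθdef]; split_ifs with h
        · simp [h]
        · exact (div_mul_cancel₀ _ (Complex.ofReal_ne_zero.mpr (norm_ne_zero_iff.mpr h))).symm
      have hm := toE_mem hu hf (g := θ • g0) (by
        calc ‖θ • g0‖ ≤ ‖θ‖ * ‖g0‖ := ContinuousLinearMap.opNorm_smul_le θ g0
          _ = 1 := by rw [hθ, hg1, one_mul])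
      have happ : toE f (θ • g0) z = θ * ((‖f z.fst‖ + ‖z.snd‖ : ℝ) : ℂ) := by
        rw [toE_apply]
        simp only [ContinuousLinearMap.smul_apply, hg2, smul_eq_mul]
        conv_lhs => rw [hfθ]
        simp [mul_add]
      have hle := le_gamma (x := z) hm
      rw [happ, norm_mul, hθ, one_mul, Complex.norm_real,
        Real.norm_of_nonneg (by positivity)] at hle
      exact hle
  obtain ⟨f0, hf0⟩ := states_nonempty u hu
  have hg : geomGamma u z.fst
      ≤ geomGamma ((WithLp.equiv 1 (X × Y)).symm (u, 0)) z - ‖z.snd‖ := by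
    refine gamma_le ⟨f0, hf0⟩ fun f hf => ?_
    linarith [key f hf]
  linarith

end Aux

theorem geomN_prod_l1_left
    {X Y : Type*} [NormedAddCommGroup X] [NormedSpace ℂ X]
    [NormedAddCommGroup Y] [NormedSpace ℂ Y]
    (u : X) (hu : ‖u‖ = 1) :
    geomN ((WithLp.equiv 1 (X × Y)).symm (u, 0)) = geomN u := by
  apply le_antisymm
  · refine csInf_le_csInf (nset_bddBelow _) ⟨geomGamma u u, u, hu, rfl⟩ ?_
    rintro r ⟨x, hx, rfl⟩
    exact ⟨(WithLp.equiv 1 (X × Y)).symm (x, 0), u0_norm x hx, (gammaE_fst hu x).symm⟩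
  · refine le_csInf ⟨_, (WithLp.equiv 1 (X × Y)).symm (u, 0), u0_norm u hu, rfl⟩ ?_
    rintro r ⟨z, hz, rfl⟩
    have h1 := gamma_plus hu z
    have h2 := n_mul_norm_le_gamma u hu z.fst
    have h3 : geomN u * ‖z.snd‖ ≤ ‖z.snd‖ :=
      mul_le_of_le_one_left (norm_nonneg _) (geomN_le_one u hu)
    have h4 : ‖z.fst‖ + ‖z.snd‖ = 1 := by rw [← Enorm z, hz]
    have h5 : geomN u * ‖z.fst‖ + geomN u * ‖z.snd‖ = geomN u := by
      rw [← mul_add, h4, mul_one]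
    linarith [h1, h2, h3, h5]
end

section
/- Let X and Y be nonzero normed spaces over ℂ and let E = X ⊕∞ Y be the product X × Y equipped with the norm ‖(x,y)‖ = max(‖x‖, ‖y‖). If (u,v) ∈ E satisfies ‖(u,v)‖ = 1 and n(E; (u,v)) > 0, then ‖u‖ = 1 and ‖v‖ = 1. -/
lemma geomGamma_nonneg {X : Type*} [NormedAddCommGroup X] [NormedSpace ℂ X] (u x : X) :
    0 ≤ geomGamma u x :=
  Real.sSup_nonneg (by rintro r ⟨f, hf, rfl⟩; positivity)

lemma geomN_le {X : Type*} [NormedAddCommGroup X] [NormedSpace ℂ X] (u x : X)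
    (hx : ‖x‖ = 1) : geomN u ≤ geomGamma u x :=
  csInf_le ⟨0, by rintro r ⟨z, hz, rfl⟩; exact geomGamma_nonneg u z⟩ ⟨x, hx, rfl⟩

/-- Core estimate: if `‖u‖ ≤ 1`, `‖v‖ < 1`, then every state at `(u,v)` vanishes on `(0,y)`. -/
lemma state_vanish_right {X Y : Type*} [NormedAddCommGroup X] [NormedSpace ℂ X]
    [NormedAddCommGroup Y] [NormedSpace ℂ Y]
    (u : X) (v : Y) (hu : ‖u‖ ≤ 1) (hv : ‖v‖ < 1) (y : Y) (hy : ‖y‖ = 1)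
    (f : WithLp ⊤ (X × Y) →L[ℂ] ℂ) (hf : f ∈ geomStates ((WithLp.equiv ⊤ (X × Y)).symm (u, v))) :
    f ((WithLp.equiv ⊤ (X × Y)).symm (0, y)) = 0 := by
  obtain ⟨hf1, hf2⟩ := hf
  by_contra hc
  set c : ℂ := f ((WithLp.equiv ⊤ (X × Y)).symm (0, y)) with hcdef
  set t : ℝ := 1 - ‖v‖ with ht
  have htpos : 0 < t := by simp [ht]; linarith
  have hcn : (0:ℝ) < ‖c‖ := norm_pos_iff.mpr hc
  set a : ℂ := (t : ℂ) * (starRingEnd ℂ) c / ‖c‖ with ha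
  have hcC : ((‖c‖ : ℂ)) ≠ 0 := Complex.ofReal_ne_zero.mpr hcn.ne'
  have hac : a * c = ((t * ‖c‖ : ℝ) : ℂ) := by
    rw [ha, div_mul_eq_mul_div, mul_assoc, mul_comm ((starRingEnd ℂ) c) c,
      Complex.mul_conj']
    norm_cast
    have h2 : ‖c‖ ≠ 0 := hcn.ne'
    field_simp [h2]
  have hna : ‖a‖ = t := by
    have h1 : ‖a‖ = |t| * ‖c‖ / |‖c‖| := by
      simp [ha, norm_div, norm_mul, RCLike.norm_conj, Real.norm_eq_abs]
    rw [h1, abs_of_pos htpos, abs_of_pos hcn, mul_div_assoc, div_self hcn.ne', mul_one]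
  set z : WithLp ⊤ (X × Y) := (WithLp.equiv ⊤ (X × Y)).symm (u, v + a • y) with hz
  have hzeq : z = (WithLp.equiv ⊤ (X × Y)).symm (u, v) +
      a • (WithLp.equiv ⊤ (X × Y)).symm (0, y) := by
    have hp : (u, v + a • y) = (u, v) + a • ((0 : X), y) := by
      simp [Prod.ext_iff]
    rw [hz, hp]; rfl
  have hfz : f z = 1 + ((t * ‖c‖ : ℝ) : ℂ) := by
    rw [hzeq, map_add, map_smul, hf2, ← hcdef, smul_eq_mul, hac]
  have hnz : ‖z‖ ≤ 1 := by
    rw [hz, WithLp.prod_norm_eq_sup]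
    have h2 : ‖v + a • y‖ ≤ 1 := by
      calc ‖v + a • y‖ ≤ ‖v‖ + ‖a • y‖ := norm_add_le _ _
        _ = ‖v‖ + t := by rw [norm_smul, hna, hy, mul_one]
        _ = 1 := by rw [ht]; ring
    exact max_le hu h2
  have hle : ‖f z‖ ≤ 1 := by
    calc ‖f z‖ ≤ ‖f‖ * ‖z‖ := f.le_opNorm z
      _ ≤ 1 := by rw [hf1, one_mul]; exact hnz
  rw [hfz] at hle
  have : ‖(1 + ((t * ‖c‖ : ℝ) : ℂ))‖ = 1 + t * ‖c‖ := by
    rw [← Complex.ofReal_one, ← Complex.ofReal_add, Complex.norm_real]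
    exact abs_of_pos (by positivity)
  rw [this] at hle
  nlinarith

lemma state_vanish_left {X Y : Type*} [NormedAddCommGroup X] [NormedSpace ℂ X]
    [NormedAddCommGroup Y] [NormedSpace ℂ Y]
    (u : X) (v : Y) (hu : ‖u‖ < 1) (hv : ‖v‖ ≤ 1) (x : X) (hx : ‖x‖ = 1)
    (f : WithLp ⊤ (X × Y) →L[ℂ] ℂ) (hf : f ∈ geomStates ((WithLp.equiv ⊤ (X × Y)).symm (u, v))) :
    f ((WithLp.equiv ⊤ (X × Y)).symm (x, 0)) = 0 := by
  obtain ⟨hf1, hf2⟩ := hf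
  by_contra hc
  set c : ℂ := f ((WithLp.equiv ⊤ (X × Y)).symm (x, 0)) with hcdef
  set t : ℝ := 1 - ‖u‖ with ht
  have htpos : 0 < t := by simp [ht]; linarith
  have hcn : (0:ℝ) < ‖c‖ := norm_pos_iff.mpr hc
  set a : ℂ := (t : ℂ) * (starRingEnd ℂ) c / ‖c‖ with ha
  have hcC : ((‖c‖ : ℂ)) ≠ 0 := Complex.ofReal_ne_zero.mpr hcn.ne'
  have hac : a * c = ((t * ‖c‖ : ℝ) : ℂ) := by
    rw [ha, div_mul_eq_mul_div, mul_assoc, mul_comm ((starRingEnd ℂ) c) c,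
      Complex.mul_conj']
    norm_cast
    have h2 : ‖c‖ ≠ 0 := hcn.ne'
    field_simp [h2]
  have hna : ‖a‖ = t := by
    have h1 : ‖a‖ = |t| * ‖c‖ / |‖c‖| := by
      simp [ha, norm_div, norm_mul, RCLike.norm_conj, Real.norm_eq_abs]
    rw [h1, abs_of_pos htpos, abs_of_pos hcn, mul_div_assoc, div_self hcn.ne', mul_one]
  set z : WithLp ⊤ (X × Y) := (WithLp.equiv ⊤ (X × Y)).symm (u + a • x, v) with hz
  have hzeq : z = (WithLp.equiv ⊤ (X × Y)).symm (u, v) +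
      a • (WithLp.equiv ⊤ (X × Y)).symm (x, 0) := by
    have hp : (u + a • x, v) = (u, v) + a • (x, (0 : Y)) := by
      simp [Prod.ext_iff]
    rw [hz, hp]; rfl
  have hfz : f z = 1 + ((t * ‖c‖ : ℝ) : ℂ) := by
    rw [hzeq, map_add, map_smul, hf2, ← hcdef, smul_eq_mul, hac]
  have hnz : ‖z‖ ≤ 1 := by
    rw [hz, WithLp.prod_norm_eq_sup]
    have h2 : ‖u + a • x‖ ≤ 1 := by
      calc ‖u + a • x‖ ≤ ‖u‖ + ‖a • x‖ := norm_add_le _ _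
        _ = ‖u‖ + t := by rw [norm_smul, hna, hx, mul_one]
        _ = 1 := by rw [ht]; ring
    exact max_le h2 hv
  have hle : ‖f z‖ ≤ 1 := by
    calc ‖f z‖ ≤ ‖f‖ * ‖z‖ := f.le_opNorm z
      _ ≤ 1 := by rw [hf1, one_mul]; exact hnz
  rw [hfz] at hle
  have : ‖(1 + ((t * ‖c‖ : ℝ) : ℂ))‖ = 1 + t * ‖c‖ := by
    rw [← Complex.ofReal_one, ← Complex.ofReal_add, Complex.norm_real]
    exact abs_of_pos (by positivity)
  rw [this] at hle
  nlinarith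

theorem norm_eq_one_of_geomN_pos_prod_linf
    {X Y : Type*} [NormedAddCommGroup X] [NormedSpace ℂ X] [Nontrivial X]
    [NormedAddCommGroup Y] [NormedSpace ℂ Y] [Nontrivial Y]
    (u : X) (v : Y)
    (huv : ‖(WithLp.equiv ⊤ (X × Y)).symm (u, v)‖ = 1)
    (hn : 0 < geomN ((WithLp.equiv ⊤ (X × Y)).symm (u, v))) :
    ‖u‖ = 1 ∧ ‖v‖ = 1 := by
  rw [WithLp.prod_norm_eq_sup] at huv
  have hmax : max ‖u‖ ‖v‖ = 1 := huv
  have hu1 : ‖u‖ ≤ 1 := le_of_max_le_left hmax.le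
  have hv1 : ‖v‖ ≤ 1 := le_of_max_le_right hmax.le
  constructor
  · by_contra h
    have hu : ‖u‖ < 1 := lt_of_le_of_ne hu1 h
    obtain ⟨x, hx⟩ := exists_norm_eq X one_pos.le
    have hxn : ‖(WithLp.equiv ⊤ (X × Y)).symm (x, (0:Y))‖ = 1 := by
      rw [WithLp.prod_norm_eq_sup]
      show max ‖x‖ ‖(0:Y)‖ = 1
      simp [hx]
    have hg : geomGamma ((WithLp.equiv ⊤ (X × Y)).symm (u, v))
        ((WithLp.equiv ⊤ (X × Y)).symm (x, (0:Y))) = 0 := by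
      apply le_antisymm _ (geomGamma_nonneg _ _)
      apply Real.sSup_le _ le_rfl
      rintro r ⟨f, hf, rfl⟩
      rw [state_vanish_left u v hu hv1 x hx f hf]
      simp
    have := geomN_le ((WithLp.equiv ⊤ (X × Y)).symm (u, v)) _ hxn
    rw [hg] at this
    linarith
  · by_contra h
    have hv : ‖v‖ < 1 := lt_of_le_of_ne hv1 h
    obtain ⟨y, hy⟩ := exists_norm_eq Y one_pos.le
    have hyn : ‖(WithLp.equiv ⊤ (X × Y)).symm ((0:X), y)‖ = 1 := by
      rw [WithLp.prod_norm_eq_sup]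
      show max ‖(0:X)‖ ‖y‖ = 1
      simp [hy]
    have hg : geomGamma ((WithLp.equiv ⊤ (X × Y)).symm (u, v))
        ((WithLp.equiv ⊤ (X × Y)).symm ((0:X), y)) = 0 := by
      apply le_antisymm _ (geomGamma_nonneg _ _)
      apply Real.sSup_le _ le_rfl
      rintro r ⟨f, hf, rfl⟩
      rw [state_vanish_right u v hu1 hv y hy f hf]
      simp
    have := geomN_le ((WithLp.equiv ⊤ (X × Y)).symm (u, v)) _ hyn
    rw [hg] at this
    linarith
end

section
/- Let X be a normed space over ℂ and let u ∈ X with ‖u‖ = 1. Suppose there exist a complex Hilbert space H, a continuous linear map Ψ : X → B(H) with ‖Ψ‖ ≤ 1 and Ψ(u) = id_H, and a constant c > 0 such that ‖Ψ(x)‖ ≥ c·‖x‖ for all x ∈ X. Then n(X;u) ≥ c/2; in particular n(X;u) > 0, and if Ψ is an isometry then n(X;u) ≥ 1/2. -/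
open scoped InnerProductSpace ComplexConjugate

lemma le_geomGamma {X : Type*} [NormedAddCommGroup X] [NormedSpace ℂ X]
    (u x : X) {f : X →L[ℂ] ℂ} (hf : f ∈ geomStates u) : ‖f x‖ ≤ geomGamma u x := by
  apply le_csSup
  · refine ⟨‖x‖, ?_⟩
    rintro r ⟨g, hg, rfl⟩
    calc ‖g x‖ ≤ ‖g‖ * ‖x‖ := g.le_opNorm x
    _ = ‖x‖ := by rw [hg.1, one_mul]
  · exact ⟨f, hf, rfl⟩

lemma geomKey {X : Type*} [NormedAddCommGroup X] [NormedSpace ℂ X]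
    {H : Type*} [NormedAddCommGroup H] [InnerProductSpace ℂ H] [CompleteSpace H]
    (u : X) (hu : ‖u‖ = 1)
    (Ψ : X →L[ℂ] (H →L[ℂ] H)) (hΨ : ‖Ψ‖ ≤ 1) (hΨu : Ψ u = ContinuousLinearMap.id ℂ H)
    (c : ℝ) (hc : 0 < c) (hinj : ∀ x : X, c * ‖x‖ ≤ ‖Ψ x‖) :
    c / 2 ≤ geomN u := by
  -- H is nontrivial
  have hidn : ‖Ψ u‖ ≠ 0 := by
    intro h0
    have := hinj u
    rw [hu, h0, mul_one] at this
    linarith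
  have hexv : ∃ v : H, v ≠ 0 := by
    by_contra hv
    push_neg at hv
    apply hidn
    rw [show Ψ u = 0 from ?_, norm_zero]
    ext w
    simp [hv w]
  -- states from unit vectors of H
  have exists_state : ∀ h : H, ‖h‖ = 1 → ∃ f ∈ geomStates u, ∀ y, f y = ⟪h, Ψ y h⟫_ℂ := by
    intro h hh
    refine ⟨(innerSL ℂ h).comp (((ContinuousLinearMap.apply ℂ H) h).comp Ψ), ?_, fun y => rfl⟩
    have hfy : ∀ y : X,
        ‖((innerSL ℂ h).comp (((ContinuousLinearMap.apply ℂ H) h).comp Ψ)) y‖ ≤ 1 * ‖y‖ := by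
      intro y
      calc ‖(⟪h, Ψ y h⟫_ℂ)‖ ≤ ‖h‖ * ‖Ψ y h‖ := norm_inner_le_norm h _
      _ ≤ ‖h‖ * (‖Ψ y‖ * ‖h‖) := by
          gcongr; exact (Ψ y).le_opNorm h
      _ = ‖Ψ y‖ := by rw [hh]; ring
      _ ≤ ‖Ψ‖ * ‖y‖ := Ψ.le_opNorm y
      _ ≤ 1 * ‖y‖ := by gcongr
    have hfu : ((innerSL ℂ h).comp (((ContinuousLinearMap.apply ℂ H) h).comp Ψ)) u = 1 := by
      show (⟪h, Ψ u h⟫_ℂ) = 1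
      rw [hΨu]
      simp [inner_self_eq_norm_sq_to_K, hh]
    constructor
    · refine le_antisymm (ContinuousLinearMap.opNorm_le_bound _ zero_le_one hfy) ?_
      have := ((innerSL ℂ h).comp (((ContinuousLinearMap.apply ℂ H) h).comp Ψ)).le_opNorm u
      rw [hfu, hu, mul_one] at this
      simpa using this
    · exact hfu
  -- main bound per unit vector x
  have hx2 : ∀ x : X, ‖x‖ = 1 → c / 2 ≤ geomGamma u x := by
    intro x hx
    set T := Ψ x with hT
    set γ := geomGamma u x with hγ
    have hγ0 : 0 ≤ γ := by
      obtain ⟨v, hv⟩ := hexv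
      have hnv : ‖(‖v‖⁻¹ : ℂ) • v‖ = 1 := by
        rw [norm_smul]
        simp [norm_ne_zero_iff.2 hv]
      obtain ⟨f, hf, -⟩ := exists_state _ hnv
      exact le_trans (norm_nonneg (f x)) (le_geomGamma u x hf)
    -- quadratic bound
    have hq : ∀ a : H, ‖(⟪a, T a⟫_ℂ)‖ ≤ γ * (‖a‖ * ‖a‖) := by
      intro a
      rcases eq_or_ne a 0 with rfl | ha
      · simp
      · have hna : (‖a‖ : ℝ) ≠ 0 := norm_ne_zero_iff.2 ha
        have hnv : ‖(‖a‖⁻¹ : ℂ) • a‖ = 1 := by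
          rw [norm_smul]; simp [hna]
        obtain ⟨f, hf, hfy⟩ := exists_state _ hnv
        have hb := le_geomGamma u x hf
        rw [hfy x] at hb
        have hid : (⟪(‖a‖⁻¹ : ℂ) • a, T ((‖a‖⁻¹ : ℂ) • a)⟫_ℂ)
            = ((‖a‖⁻¹ : ℂ) * (‖a‖⁻¹ : ℂ)) * ⟪a, T a⟫_ℂ := by
          rw [map_smul, inner_smul_left, inner_smul_right]
          simp [Complex.conj_ofReal]
          ring
        rw [hid] at hb
        rw [norm_mul, norm_mul] at hb
        have h1 : ‖((‖a‖ : ℂ))⁻¹‖ = ‖a‖⁻¹ := by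
          rw [norm_inv, Complex.norm_real, norm_norm]
        rw [h1] at hb
        have h2 : 0 < ‖a‖ := norm_pos_iff.2 ha
        have hkey : ‖(⟪a, T a⟫_ℂ)‖ = (‖a‖ * ‖a‖) * (‖a‖⁻¹ * ‖a‖⁻¹ * ‖(⟪a, T a⟫_ℂ)‖) := by
          field_simp
        rw [hkey, mul_comm γ (‖a‖ * ‖a‖)]
        exact mul_le_mul_of_nonneg_left hb (by positivity)
    -- polarization bound for the sesquilinear form
    have hsesq : ∀ a b : H, 4 * ‖(⟪a, T b⟫_ℂ)‖ ≤ 4 * γ * (‖a‖ * ‖a‖ + ‖b‖ * ‖b‖) := by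
      intro a b
      have hident : (4 : ℂ) * ⟪a, T b⟫_ℂ =
          ⟪a + b, T (a + b)⟫_ℂ - ⟪a - b, T (a - b)⟫_ℂ
          - Complex.I * (⟪a + Complex.I • b, T (a + Complex.I • b)⟫_ℂ
            - ⟪a - Complex.I • b, T (a - Complex.I • b)⟫_ℂ) := by
        simp only [map_add, map_sub, map_smul, inner_add_left, inner_add_right,
          inner_sub_left, inner_sub_right, inner_smul_left, inner_smul_right,
          Complex.conj_I]
        ring_nf
        simp [Complex.I_sq]
        ring
      have hnorm : 4 * ‖(⟪a, T b⟫_ℂ)‖ = ‖(4 : ℂ) * ⟪a, T b⟫_ℂ‖ := by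
        rw [norm_mul]; norm_num
      rw [hnorm, hident]
      have hIb : ‖Complex.I • b‖ = ‖b‖ := by
        rw [norm_smul, Complex.norm_I, one_mul]
      calc ‖_ - _ - _‖ ≤ ‖⟪a + b, T (a + b)⟫_ℂ - ⟪a - b, T (a - b)⟫_ℂ‖
            + ‖Complex.I * (⟪a + Complex.I • b, T (a + Complex.I • b)⟫_ℂ
              - ⟪a - Complex.I • b, T (a - Complex.I • b)⟫_ℂ)‖ := norm_sub_le _ _
      _ ≤ (‖⟪a + b, T (a + b)⟫_ℂ‖ + ‖⟪a - b, T (a - b)⟫_ℂ‖)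
            + (‖⟪a + Complex.I • b, T (a + Complex.I • b)⟫_ℂ‖
              + ‖⟪a - Complex.I • b, T (a - Complex.I • b)⟫_ℂ‖) := by
            rw [norm_mul, Complex.norm_I, one_mul]
            gcongr <;> exact norm_sub_le _ _
      _ ≤ (γ * (‖a + b‖ * ‖a + b‖) + γ * (‖a - b‖ * ‖a - b‖))
            + (γ * (‖a + Complex.I • b‖ * ‖a + Complex.I • b‖)
              + γ * (‖a - Complex.I • b‖ * ‖a - Complex.I • b‖)) := by
            gcongr <;> exact hq _
      _ = γ * ((‖a + b‖ * ‖a + b‖ + ‖a - b‖ * ‖a - b‖)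
            + (‖a + Complex.I • b‖ * ‖a + Complex.I • b‖
              + ‖a - Complex.I • b‖ * ‖a - Complex.I • b‖)) := by ring
      _ = γ * (2 * (‖a‖ * ‖a‖ + ‖b‖ * ‖b‖) + 2 * (‖a‖ * ‖a‖ + ‖Complex.I • b‖ * ‖Complex.I • b‖)) := by
            have h1 := parallelogram_law_with_norm ℂ a b
            have h2 := parallelogram_law_with_norm ℂ a (Complex.I • b)
            simp only [sq] at h1 h2
            rw [h1, h2]
      _ = 4 * γ * (‖a‖ * ‖a‖ + ‖b‖ * ‖b‖) := by rw [hIb]; ring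
    -- norm bound on T
    have hTb : ∀ b : H, ‖T b‖ ≤ 2 * γ * ‖b‖ := by
      intro b
      rcases eq_or_ne (T b) 0 with h0 | h0
      · rw [h0, norm_zero]; positivity
      · have hTb0 : (0 : ℝ) < ‖T b‖ := norm_pos_iff.2 h0
        set a : H := ((‖b‖ / ‖T b‖ : ℝ) : ℂ) • T b with ha
        have hna : ‖a‖ = ‖b‖ := by
          rw [ha, norm_smul]
          simp [abs_of_nonneg (div_nonneg (norm_nonneg b) (norm_nonneg (T b)))]
          field_simp
        have hinner : ‖(⟪a, T b⟫_ℂ)‖ = ‖b‖ * ‖T b‖ := by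
          rw [ha, inner_smul_left, Complex.conj_ofReal, norm_mul,
            inner_self_eq_norm_sq_to_K]
          simp [abs_of_nonneg (div_nonneg (norm_nonneg b) (norm_nonneg (T b)))]
          field_simp
        have := hsesq a b
        rw [hinner, hna] at this
        rcases eq_or_ne b 0 with rfl | hb0
        · simp at h0
        · have hb0' : (0 : ℝ) < ‖b‖ := norm_pos_iff.2 hb0
          nlinarith
    have hTle : ‖T‖ ≤ 2 * γ := ContinuousLinearMap.opNorm_le_bound _ (by positivity) hTb
    have : c ≤ 2 * γ := by
      have := hinj x
      rw [hx, mul_one] at this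
      exact le_trans this hTle
    linarith
  -- conclude
  apply le_csInf
  · exact ⟨geomGamma u u, u, hu, rfl⟩
  · rintro r ⟨x, hx, rfl⟩
    exact hx2 x hx

theorem geomN_ge_half_of_unital_contractive_injection_into_operators
    {X : Type*} [NormedAddCommGroup X] [NormedSpace ℂ X]
    {H : Type*} [NormedAddCommGroup H] [InnerProductSpace ℂ H] [CompleteSpace H]
    (u : X) (hu : ‖u‖ = 1)
    (Ψ : X →L[ℂ] (H →L[ℂ] H)) (hΨ : ‖Ψ‖ ≤ 1) (hΨu : Ψ u = ContinuousLinearMap.id ℂ H)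
    (c : ℝ) (hc : 0 < c) (hinj : ∀ x : X, c * ‖x‖ ≤ ‖Ψ x‖) :
    c / 2 ≤ geomN u ∧ 0 < geomN u ∧ ((∀ x : X, ‖Ψ x‖ = ‖x‖) → 1 / 2 ≤ geomN u) := by
  have h1 := geomKey u hu Ψ hΨ hΨu c hc hinj
  refine ⟨h1, lt_of_lt_of_le (by linarith) h1, fun hiso => ?_⟩
  have := geomKey u hu Ψ hΨ hΨu 1 one_pos (fun x => by rw [one_mul, hiso x])
  linarith
end
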